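/- Any set of C(2n-4, n-2) + 1 points in general position in the plane contains n points in convex position. -/

import Mathlib

/-- No three of the points of `S` are collinear. -/
def NoThreeCollinear (S : Set (ℝ × ℝ)) : Prop :=
  ∀ p ∈ S, ∀ q ∈ S, ∀ r ∈ S, p ≠ q → p ≠ r → q ≠ r →
    AffineIndependent ℝ ![p, q, r]

/-- A set of points is in convex position (convexly independent). -/
def ConvexIndep (S : Set (ℝ × ℝ)) : Prop :=
  ∀ p ∈ S, p ∉ convexHull ℝ (S \ {p})
/-- Orientation determinant of three planar points. -/
def det3 (a b c : ℝ × ℝ) : ℝ := (b.1-a.1)*(c.2-a.2) - (b.2-a.2)*(c.1-a.1)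

/-- Sheared x-coordinate. -/
def fx (t : ℝ) (p : ℝ × ℝ) : ℝ := p.1 + t * p.2

/-- Slope w.r.t. sheared coordinates. -/
noncomputable def St (t : ℝ) (a b : ℝ × ℝ) : ℝ := (b.2 - a.2) / (fx t b - fx t a)

lemma det3_fx (t : ℝ) (a b c : ℝ × ℝ) :
    (fx t b - fx t a)*(c.2-a.2) - (b.2-a.2)*(fx t c - fx t a) = det3 a b c := by
  simp only [fx, det3]; ring

lemma det3_pos_iff₁ {t : ℝ} {a b c : ℝ × ℝ} (h1 : fx t a < fx t b) (h2 : fx t b < fx t c) :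
    0 < det3 a b c ↔ St t a b < St t a c := by
  rw [← det3_fx t a b c, St, St, div_lt_div_iff₀ (by linarith) (by linarith)]
  constructor <;> intro h <;> nlinarith

lemma det3_pos_iff₂ {t : ℝ} {a b c : ℝ × ℝ} (h1 : fx t a < fx t b) (h2 : fx t b < fx t c) :
    0 < det3 a b c ↔ St t a b < St t b c := by
  rw [← det3_fx t a b c, St, St, div_lt_div_iff₀ (by linarith) (by linarith)]
  constructor <;> intro h <;> nlinarith

lemma det3_pos_iff₃ {t : ℝ} {a b c : ℝ × ℝ} (h1 : fx t a < fx t b) (h2 : fx t b < fx t c) :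
    0 < det3 a b c ↔ St t a c < St t b c := by
  rw [← det3_fx t a b c, St, St, div_lt_div_iff₀ (by linarith) (by linarith)]
  constructor <;> intro h <;> nlinarith

lemma det3_neg_iff₁ {t : ℝ} {a b c : ℝ × ℝ} (h1 : fx t a < fx t b) (h2 : fx t b < fx t c) :
    det3 a b c < 0 ↔ St t a c < St t a b := by
  rw [← det3_fx t a b c, St, St, div_lt_div_iff₀ (by linarith) (by linarith)]
  constructor <;> intro h <;> nlinarith

lemma det3_neg_iff₂ {t : ℝ} {a b c : ℝ × ℝ} (h1 : fx t a < fx t b) (h2 : fx t b < fx t c) :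
    det3 a b c < 0 ↔ St t b c < St t a b := by
  rw [← det3_fx t a b c, St, St, div_lt_div_iff₀ (by linarith) (by linarith)]
  constructor <;> intro h <;> nlinarith

lemma det3_neg_iff₃ {t : ℝ} {a b c : ℝ × ℝ} (h1 : fx t a < fx t b) (h2 : fx t b < fx t c) :
    det3 a b c < 0 ↔ St t b c < St t a c := by
  rw [← det3_fx t a b c, St, St, div_lt_div_iff₀ (by linarith) (by linarith)]
  constructor <;> intro h <;> nlinarith

/-- Every 3-element sublist satisfies `R`. -/
def Chain3 {α : Type*} (R : α → α → α → Prop) (l : List α) : Prop :=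
  ∀ a b c : α, [a,b,c].Sublist l → R a b c

lemma chain3_of_short {α : Type*} {R : α → α → α → Prop} {l : List α}
    (h : l.length ≤ 2) : Chain3 R l := by
  intro a b c hs
  have := hs.length_le
  simp at this; omega

lemma chain3_cons {α : Type*} {R : α → α → α → Prop}
    (hT : ∀ w x y z, R w x y → R x y z → R w x z ∧ R w y z)
    {p r : α} {tl : List α} (hC : Chain3 R (p::r::tl)) {q : α} (hq : R q p r) :
    Chain3 R (q::p::r::tl) := by
  have claim1 : ∀ c ∈ tl, R q p c := by
    intro c hc
    have hprc : R p r c := hC p r c (by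
      refine List.cons_sublist_cons.2 (List.cons_sublist_cons.2 ?_)
      simpa using hc)
    exact (hT q p r c hq hprc).1
  have claim1' : ∀ c ∈ r::tl, R q p c := by
    intro c hc
    rcases List.mem_cons.1 hc with h | h
    · rw [h]; exact hq
    · exact claim1 c h
  have claim2 : ∀ b c, [b,c].Sublist (r::tl) → R q b c := by
    intro b c hs
    rcases List.sublist_cons_iff.1 hs with hs' | ⟨rest, heq, hs'⟩
    · -- [b,c] <+ tl
      have hqpb : R q p b := claim1 b (hs'.subset (by simp))
      have hpbc : R p b c := hC p b c (by
        refine List.cons_sublist_cons.2 ?_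
        exact hs'.trans (List.sublist_cons_self _ _))
      exact (hT q p b c hqpb hpbc).2
    · -- b = r, [c] <+ tl
      have hb : b = r := by injection heq
      have hrest : [c] = rest := by injection heq with h1 h2
      rw [hb]
      have hc : c ∈ tl := by
        have := hs'.subset (l₁ := rest); rw [← hrest] at this; simpa using this
      have hprc : R p r c := hC p r c (by
        refine List.cons_sublist_cons.2 (List.cons_sublist_cons.2 ?_)
        simpa using hc)
      exact (hT q p r c hq hprc).2
  intro a b c hs
  rcases List.sublist_cons_iff.1 hs with hs' | ⟨rest, heq, hs'⟩
  · exact hC a b c hs'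
  · have ha : a = q := by injection heq
    have hrest : [b,c] = rest := by injection heq with h1 h2
    rw [ha]
    rw [← hrest] at hs'
    rcases List.sublist_cons_iff.1 hs' with hs'' | ⟨rest2, heq2, hs''⟩
    · exact claim2 b c hs''
    · have hb : b = p := by injection heq2
      have hrest2 : [c] = rest2 := by injection heq2 with h1 h2
      rw [hb]
      rw [← hrest2] at hs''
      have hc : c ∈ r::tl := by have := hs''.subset (l₁ := [c]); simpa using this
      exact claim1' c hc

/-- Cup relation for lists stored in *decreasing* `fx` order. -/
def Rcup (t : ℝ) (a b c : ℝ × ℝ) : Prop :=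
  fx t b < fx t a ∧ fx t c < fx t b ∧ 0 < det3 c b a

/-- Cap relation for lists stored in increasing `fx` order. -/
def Rcap (t : ℝ) (a b c : ℝ × ℝ) : Prop :=
  fx t a < fx t b ∧ fx t b < fx t c ∧ det3 a b c < 0

lemma Rcup_trans (t : ℝ) : ∀ w x y z, Rcup t w x y → Rcup t x y z →
    Rcup t w x z ∧ Rcup t w y z := by
  rintro w x y z ⟨h1, h2, d1⟩ ⟨h3, h4, d2⟩
  -- increasing order: z < y < x < w
  have s1 : St t z y < St t y x := (det3_pos_iff₂ h4 h2).1 d2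
  have s2 : St t y x < St t x w := (det3_pos_iff₂ h2 h1).1 d1
  have s3 : St t z y < St t y w := by
    have : St t y x < St t y w := (det3_pos_iff₁ h2 h1).1 d1
    linarith
  have s4 : St t z x < St t y x := (det3_pos_iff₃ h4 h2).1 d2
  refine ⟨⟨h1, lt_trans h4 h2, ?_⟩, ⟨lt_trans h2 h1, h4, ?_⟩⟩
  · -- det3 z x w > 0 : use s z x < s x w
    exact (det3_pos_iff₂ (lt_trans h4 h2) h1).2 (lt_trans s4 s2)
  · -- det3 z y w > 0 : use s z y < s y w
    exact (det3_pos_iff₂ h4 (lt_trans h2 h1)).2 s3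

lemma Rcap_trans (t : ℝ) : ∀ w x y z, Rcap t w x y → Rcap t x y z →
    Rcap t w x z ∧ Rcap t w y z := by
  rintro w x y z ⟨h1, h2, d1⟩ ⟨h3, h4, d2⟩
  -- increasing order: w < x < y < z
  have s1 : St t x y < St t w x := (det3_neg_iff₂ h1 h2).1 d1
  have s2 : St t y z < St t x y := (det3_neg_iff₂ h3 h4).1 d2
  have s3 : St t x z < St t x y := (det3_neg_iff₁ h3 h4).1 d2
  refine ⟨⟨h1, lt_trans h3 h4, ?_⟩, ⟨lt_trans h1 h2, h4, ?_⟩⟩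
  · exact (det3_neg_iff₂ h1 (lt_trans h3 h4)).2 (lt_trans s3 s1)
  · -- det3 w y z < 0 : need St t y z < St t w y
    have : St t y z < St t w y := by
      have h5 := (det3_neg_iff₃ h1 h2).1 d1  -- St x y < St w y
      linarith
    exact (det3_neg_iff₂ (lt_trans h1 h2) h4).2 this

def IsCup (t : ℝ) (S : Finset (ℝ × ℝ)) (l : List (ℝ × ℝ)) : Prop :=
  l.Pairwise (fun u v => fx t v < fx t u) ∧ Chain3 (Rcup t) l ∧ ∀ p ∈ l, p ∈ S

def IsCap (t : ℝ) (S : Finset (ℝ × ℝ)) (l : List (ℝ × ℝ)) : Prop :=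
  l.Pairwise (fun u v => fx t u < fx t v) ∧ Chain3 (Rcap t) l ∧ ∀ p ∈ l, p ∈ S

lemma IsCup.mono {t : ℝ} {S S' : Finset (ℝ × ℝ)} {l} (h : IsCup t S l) (hss : S ⊆ S') :
    IsCup t S' l := ⟨h.1, h.2.1, fun p hp => hss (h.2.2 p hp)⟩

lemma IsCap.mono {t : ℝ} {S S' : Finset (ℝ × ℝ)} {l} (h : IsCap t S l) (hss : S ⊆ S') :
    IsCap t S' l := ⟨h.1, h.2.1, fun p hp => hss (h.2.2 p hp)⟩

lemma pairwise_cons_lt {f : ℝ × ℝ → ℝ} {p x : ℝ × ℝ} {tl : List (ℝ × ℝ)}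
    (h : (p::tl).Pairwise (fun u v => f u < f v)) (hx : f x < f p) :
    (x::p::tl).Pairwise (fun u v => f u < f v) := by
  refine List.Pairwise.cons ?_ h
  intro v hv
  rcases List.mem_cons.1 hv with rfl | hv'
  · exact hx
  · have := (List.pairwise_cons.1 h).1 v hv'
    linarith

lemma pairwise_cons_gt {f : ℝ × ℝ → ℝ} {p x : ℝ × ℝ} {tl : List (ℝ × ℝ)}
    (h : (p::tl).Pairwise (fun u v => f v < f u)) (hx : f p < f x) :
    (x::p::tl).Pairwise (fun u v => f v < f u) := by
  refine List.Pairwise.cons ?_ h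
  intro v hv
  rcases List.mem_cons.1 hv with rfl | hv'
  · exact hx
  · have := (List.pairwise_cons.1 h).1 v hv'
    linarith

lemma cupcap (t : ℝ) : ∀ (n a b : ℕ), a + b = n → ∀ S : Finset (ℝ × ℝ),
    (∀ p ∈ S, ∀ q ∈ S, p ≠ q → fx t p ≠ fx t q) →
    (∀ p ∈ S, ∀ q ∈ S, ∀ r ∈ S, p ≠ q → p ≠ r → q ≠ r → det3 p q r ≠ 0) →
    Nat.choose (a+b) a + 1 ≤ S.card →
    (∃ l, IsCup t S l ∧ l.length = a+2) ∨ (∃ l, IsCap t S l ∧ l.length = b+2) := by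
  intro n
  induction n using Nat.strong_induction_on with
  | _ n ih =>
  intro a b hab S hx hdet hcard
  classical
  have hne : ∀ p ∈ S, ∀ q ∈ S, fx t p < fx t q → p ≠ q := by
    rintro p hp q hq hlt rfl; exact lt_irrefl _ hlt
  match a, b with
  | 0, b =>
    left
    have h2 : 1 < S.card := by
      have : Nat.choose (0+b) 0 = 1 := Nat.choose_zero_right _
      omega
    obtain ⟨p, hp, q, hq, hpq⟩ := Finset.one_lt_card.1 h2
    have hfx : fx t p ≠ fx t q := hx p hp q hq hpq
    rcases lt_or_gt_of_ne hfx with h | h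
    · exact ⟨[q, p], ⟨by simp [h], chain3_of_short (by simp), by
        intro x hxm; rcases List.mem_cons.1 hxm with rfl | hxm'
        · exact hq
        · simp at hxm'; subst hxm'; exact hp⟩, rfl⟩
    · exact ⟨[p, q], ⟨by simp [h], chain3_of_short (by simp), by
        intro x hxm; rcases List.mem_cons.1 hxm with rfl | hxm'
        · exact hp
        · simp at hxm'; subst hxm'; exact hq⟩, rfl⟩
  | a'+1, 0 =>
    right
    have h2 : 1 < S.card := by
      have : Nat.choose (a'+1+0) (a'+1) = 1 := by
        simp [Nat.choose_self]
      omega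
    obtain ⟨p, hp, q, hq, hpq⟩ := Finset.one_lt_card.1 h2
    have hfx : fx t p ≠ fx t q := hx p hp q hq hpq
    rcases lt_or_gt_of_ne hfx with h | h
    · exact ⟨[p, q], ⟨by simp [h], chain3_of_short (by simp), by
        intro x hxm; rcases List.mem_cons.1 hxm with rfl | hxm'
        · exact hp
        · simp at hxm'; subst hxm'; exact hq⟩, rfl⟩
    · exact ⟨[q, p], ⟨by simp [h], chain3_of_short (by simp), by
        intro x hxm; rcases List.mem_cons.1 hxm with rfl | hxm'
        · exact hq
        · simp at hxm'; subst hxm'; exact hp⟩, rfl⟩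
  | a'+1, b'+1 =>
    set a := a' + 1 with ha
    set b := b' + 1 with hb
    set E := S.filter (fun p => ∃ l, IsCup t S l ∧ l.length = a + 1 ∧ l.head? = some p)
      with hEdef
    have hE : E ⊆ S := Finset.filter_subset _ _
    by_cases h1 : Nat.choose (a' + b) a' + 1 ≤ (S \ E).card
    · have hsub : S \ E ⊆ S := Finset.sdiff_subset
      have hrec := ih (a' + b) (by omega) a' b rfl (S \ E)
        (fun p hp q hq => hx p (hsub hp) q (hsub hq))
        (fun p hp q hq r hr => hdet p (hsub hp) q (hsub hq) r (hsub hr)) h1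
      rcases hrec with ⟨l, hl, hlen⟩ | ⟨l, hl, hlen⟩
      · exfalso
        obtain ⟨p, l', rfl⟩ : ∃ p l', l = p :: l' := by
          cases l with
          | nil => simp at hlen
          | cons p l' => exact ⟨p, l', rfl⟩
        have hpE : p ∈ E := by
          rw [hEdef, Finset.mem_filter]
          exact ⟨hsub (hl.2.2 p (by simp)),
            ⟨p :: l', hl.mono hsub, by simpa using hlen, rfl⟩⟩
        have hmem := hl.2.2 p (by simp)
        rw [Finset.mem_sdiff] at hmem
        exact hmem.2 hpE
      · exact Or.inr ⟨l, hl.mono hsub, hlen⟩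
    · push_neg at h1
      have hcards : (S \ E).card + E.card = S.card := Finset.card_sdiff_add_card_eq_card hE
      have hpascal : Nat.choose (a+b) a = Nat.choose (a'+b) a' + Nat.choose (a'+b) a := by
        have heq : a + b = (a' + b) + 1 := by omega
        rw [heq, ha, Nat.choose_succ_succ]
      have hEcard : Nat.choose (a + b') a + 1 ≤ E.card := by
        have heq : Nat.choose (a'+b) a = Nat.choose (a+b') a := by
          congr 1; omega
        omega
      have hrec := ih (a + b') (by omega) a b' rfl E
        (fun p hp q hq => hx p (hE hp) q (hE hq))
        (fun p hp q hq r hr => hdet p (hE hp) q (hE hq) r (hE hr)) hEcard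
      rcases hrec with ⟨l, hl, hlen⟩ | ⟨l, hl, hlen⟩
      · exact Or.inl ⟨l, hl.mono hE, hlen⟩
      · -- cap of length b+1 in E; extend
        obtain ⟨p, r, rest, rfl⟩ : ∃ p r rest, l = p :: r :: rest := by
          cases l with
          | nil => simp at hlen
          | cons p l1 =>
            cases l1 with
            | nil => simp at hlen
            | cons r rest => exact ⟨p, r, rest, rfl⟩
        have hlcap : IsCap t S (p :: r :: rest) := hl.mono hE
        have hpE : p ∈ E := hl.2.2 p (by simp)
        rw [hEdef, Finset.mem_filter] at hpE
        have hpS : p ∈ S := hpE.1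
        obtain ⟨u, hu, hulen, huhead⟩ := hpE.2
        obtain ⟨u1, rfl⟩ : ∃ u1, u = p :: u1 := by
          cases u with
          | nil => simp at huhead
          | cons x u1 =>
            simp only [List.head?_cons, Option.some.injEq] at huhead
            exact ⟨u1, by rw [huhead]⟩
        obtain ⟨q, u'', rfl⟩ : ∃ q u'', u1 = q :: u'' := by
          cases u1 with
          | nil => simp at hulen
          | cons q u'' => exact ⟨q, u'', rfl⟩
        have hqS : q ∈ S := hu.2.2 q (by simp)
        have hrS : r ∈ S := hlcap.2.2 r (by simp)
        have fxqp : fx t q < fx t p := (List.pairwise_cons.1 hu.1).1 q (by simp)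
        have fxpr : fx t p < fx t r := (List.pairwise_cons.1 hlcap.1).1 r (by simp)
        have hqp : q ≠ p := hne q hqS p hpS fxqp
        have hpr : p ≠ r := hne p hpS r hrS fxpr
        have hqr : q ≠ r := hne q hqS r hrS (lt_trans fxqp fxpr)
        have hd : det3 q p r ≠ 0 := hdet q hqS p hpS r hrS hqp hqr hpr
        rcases lt_or_gt_of_ne hd with hdneg | hdpos
        · -- extend the cap to the left with q
          right
          refine ⟨q :: p :: r :: rest, ⟨?_, ?_, ?_⟩, ?_⟩
          · exact pairwise_cons_lt hlcap.1 fxqp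
          · exact chain3_cons (Rcap_trans t) hlcap.2.1 ⟨fxqp, fxpr, hdneg⟩
          · intro z hz
            rcases List.mem_cons.1 hz with rfl | hz'
            · exact hqS
            · exact hlcap.2.2 z hz'
          · simp at hlen ⊢; omega
        · -- extend the cup to the right with r
          left
          refine ⟨r :: p :: q :: u'', ⟨?_, ?_, ?_⟩, ?_⟩
          · exact pairwise_cons_gt hu.1 fxpr
          · exact chain3_cons (Rcup_trans t) hu.2.1 ⟨fxpr, fxqp, hdpos⟩
          · intro z hz
            rcases List.mem_cons.1 hz with rfl | hz'
            · exact hrS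
            · exact hu.2.2 z hz'
          · simp at hulen ⊢; omega

lemma isLinearMap_sep (m t : ℝ) :
    IsLinearMap ℝ (fun z : ℝ × ℝ => z.2 - m * (z.1 + t * z.2)) := by
  constructor
  · intro x y; simp [Prod.fst_add, Prod.snd_add]; ring
  · intro c x; simp [Prod.smul_fst, Prod.smul_snd, smul_eq_mul]; ring

lemma isLinearMap_sep' (m t : ℝ) :
    IsLinearMap ℝ (fun z : ℝ × ℝ => m * (z.1 + t * z.2) - z.2) := by
  constructor
  · intro x y; simp [Prod.fst_add, Prod.snd_add]; ring
  · intro c x; simp [Prod.smul_fst, Prod.smul_snd, smul_eq_mul]; ring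

lemma not_mem_hull {A : Set (ℝ × ℝ)} {p : ℝ × ℝ} {f : ℝ × ℝ → ℝ}
    (hf : IsLinearMap ℝ f) (h : ∀ q ∈ A, f p < f q) : p ∉ convexHull ℝ A := by
  intro hp
  have h2 : A ⊆ {w | f p < f w} := fun q hq => h q hq
  have hsub : convexHull ℝ A ⊆ {w | f p < f w} :=
    convexHull_min h2 (convex_halfSpace_gt hf (f p))
  exact lt_irrefl (f p) (hsub hp)

lemma cup_convexIndep (t : ℝ) {l : List (ℝ × ℝ)}
    (hpw : l.Pairwise (fun u v => fx t u < fx t v))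
    (h3 : ∀ a b c : ℝ × ℝ, [a,b,c].Sublist l → 0 < det3 a b c) :
    ConvexIndep ↑l.toFinset := by
  intro p hp
  have hpl : p ∈ l := by
    simpa using hp
  obtain ⟨l₁, l₂, hsplit⟩ := List.append_of_mem hpl
  have hpw' := hsplit ▸ hpw
  have h3' : ∀ a b c : ℝ × ℝ, [a,b,c].Sublist (l₁ ++ p :: l₂) → 0 < det3 a b c := by
    intro a b c hs; exact h3 a b c (hsplit ▸ hs)
  rw [List.pairwise_append] at hpw'
  have hq1 : ∀ q ∈ l₁, fx t q < fx t p := fun q hq => hpw'.2.2 q hq p (by simp)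
  have hr1 : ∀ r ∈ l₂, fx t p < fx t r := fun r hr => (List.pairwise_cons.1 hpw'.2.1).1 r hr
  -- separating slope
  have key : ∃ m : ℝ, (∀ q ∈ l₁, St t q p < m) ∧ (∀ r ∈ l₂, m < St t p r) := by
    rcases List.eq_nil_or_concat l₁ with h₁ | ⟨l₁', qs, h₁⟩ <;> rcases l₂ with _ | ⟨rs, l₂'⟩
    · exact ⟨0, by simp [h₁], by simp⟩
    · -- l₁ = [], l₂ = rs :: l₂'
      refine ⟨St t p rs - 1, by simp [h₁], ?_⟩
      intro r hr
      rcases List.mem_cons.1 hr with rfl | hr'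
      · linarith
      · have hprs : fx t p < fx t rs := hr1 rs (by simp)
        have hrsr : fx t rs < fx t r := (List.pairwise_cons.1 hpw'.2.1.of_cons).1 r hr'
        have hsub : [p, rs, r].Sublist (l₁ ++ p :: rs :: l₂') := by
          refine List.Sublist.trans ?_ (List.sublist_append_right l₁ _)
          exact (List.singleton_sublist.2 hr').cons₂ rs |>.cons₂ p
        have := (det3_pos_iff₁ hprs hrsr).1 (h3' p rs r hsub)
        linarith
    · -- l₁ = l₁' ++ [qs], l₂ = []
      rw [List.concat_eq_append] at h₁
      refine ⟨St t qs p + 1, ?_, by simp⟩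
      intro q hq
      rw [h₁] at hq
      rcases List.mem_append.1 hq with hq' | hq'
      · have hqqs : fx t q < fx t qs := by
          have := hsplit ▸ hpw
          rw [h₁] at hpw'
          exact (List.pairwise_append.1 hpw'.1).2.2 q hq' qs (by simp)
        have hqsp : fx t qs < fx t p := hq1 qs (by rw [h₁]; simp)
        have hsub : [q, qs, p].Sublist (l₁ ++ [p]) := by
          rw [h₁, List.append_assoc]
          exact List.Sublist.append (l₁ := [q]) (r₁ := [qs, p])
            (List.singleton_sublist.2 hq') (List.Sublist.refl _)
        have := (det3_pos_iff₃ hqqs hqsp).1 (h3' q qs p hsub)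
        linarith
      · simp at hq'; subst hq'; linarith
    · -- both nonempty
      rw [List.concat_eq_append] at h₁
      have hqsp : fx t qs < fx t p := hq1 qs (by rw [h₁]; simp)
      have hprs : fx t p < fx t rs := hr1 rs (by simp)
      have hsubm : [qs, p, rs].Sublist (l₁ ++ p :: rs :: l₂') := by
        rw [h₁, List.append_assoc]
        refine List.Sublist.trans ?_ (List.sublist_append_right l₁' _)
        simp only [List.singleton_append]
        exact ((List.nil_sublist l₂').cons₂ rs |>.cons₂ p).cons₂ qs
      have hgap : St t qs p < St t p rs :=
        (det3_pos_iff₂ hqsp hprs).1 (h3' qs p rs hsubm)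
      refine ⟨(St t qs p + St t p rs)/2, ?_, ?_⟩
      · intro q hq
        rw [h₁] at hq
        rcases List.mem_append.1 hq with hq' | hq'
        · have hqqs : fx t q < fx t qs := by
            rw [h₁] at hpw'
            exact (List.pairwise_append.1 hpw'.1).2.2 q hq' qs (by simp)
          have hsub : [q, qs, p].Sublist (l₁ ++ p :: rs :: l₂') := by
            rw [h₁, List.append_assoc]
            refine List.Sublist.append (l₁ := [q]) (r₁ := [qs, p])
              (List.singleton_sublist.2 hq') ?_
            exact ((List.nil_sublist (rs :: l₂')).cons₂ p).cons₂ qs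
          have := (det3_pos_iff₃ hqqs hqsp).1 (h3' q qs p hsub)
          linarith
        · simp at hq'; subst hq'; linarith
      · intro r hr
        rcases List.mem_cons.1 hr with rfl | hr'
        · linarith
        · have hrsr : fx t rs < fx t r := (List.pairwise_cons.1 hpw'.2.1.of_cons).1 r hr'
          have hsub : [p, rs, r].Sublist (l₁ ++ p :: rs :: l₂') := by
            refine List.Sublist.trans ?_ (List.sublist_append_right l₁ _)
            exact (List.singleton_sublist.2 hr').cons₂ rs |>.cons₂ p
          have := (det3_pos_iff₁ hprs hrsr).1 (h3' p rs r hsub)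
          linarith
  obtain ⟨m, hm1, hm2⟩ := key
  apply not_mem_hull (isLinearMap_sep m t)
  intro z hz
  obtain ⟨hzT, hzp⟩ := hz
  have hzl : z ∈ l := by simpa using hzT
  have hzp' : z ≠ p := by simpa using hzp
  rw [hsplit] at hzl
  rcases List.mem_append.1 hzl with hz1 | hz2
  · have h1 := hm1 z hz1
    have h2 := hq1 z hz1
    rw [St, div_lt_iff₀ (by linarith)] at h1
    simp only [fx] at h1 h2 ⊢
    nlinarith
  · rcases List.mem_cons.1 hz2 with rfl | hz2'
    · exact absurd rfl hzp'
    · have h1 := hm2 z hz2'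
      have h2 := hr1 z hz2'
      rw [St, lt_div_iff₀ (by linarith)] at h1
      simp only [fx] at h1 h2 ⊢
      nlinarith

lemma cap_convexIndep (t : ℝ) {l : List (ℝ × ℝ)}
    (hpw : l.Pairwise (fun u v => fx t u < fx t v))
    (h3 : ∀ a b c : ℝ × ℝ, [a,b,c].Sublist l → det3 a b c < 0) :
    ConvexIndep ↑l.toFinset := by
  intro p hp
  have hpl : p ∈ l := by
    simpa using hp
  obtain ⟨l₁, l₂, hsplit⟩ := List.append_of_mem hpl
  have hpw' := hsplit ▸ hpw
  have h3' : ∀ a b c : ℝ × ℝ, [a,b,c].Sublist (l₁ ++ p :: l₂) → det3 a b c < 0 := by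
    intro a b c hs; exact h3 a b c (hsplit ▸ hs)
  rw [List.pairwise_append] at hpw'
  have hq1 : ∀ q ∈ l₁, fx t q < fx t p := fun q hq => hpw'.2.2 q hq p (by simp)
  have hr1 : ∀ r ∈ l₂, fx t p < fx t r := fun r hr => (List.pairwise_cons.1 hpw'.2.1).1 r hr
  have key : ∃ m : ℝ, (∀ q ∈ l₁, m < St t q p) ∧ (∀ r ∈ l₂, St t p r < m) := by
    rcases List.eq_nil_or_concat l₁ with h₁ | ⟨l₁', qs, h₁⟩ <;> rcases l₂ with _ | ⟨rs, l₂'⟩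
    · exact ⟨0, by simp [h₁], by simp⟩
    · -- l₁ = [], l₂ = rs :: l₂'
      refine ⟨St t p rs + 1, by simp [h₁], ?_⟩
      intro r hr
      rcases List.mem_cons.1 hr with rfl | hr'
      · linarith
      · have hprs : fx t p < fx t rs := hr1 rs (by simp)
        have hrsr : fx t rs < fx t r := (List.pairwise_cons.1 hpw'.2.1.of_cons).1 r hr'
        have hsub : [p, rs, r].Sublist (l₁ ++ p :: rs :: l₂') := by
          refine List.Sublist.trans ?_ (List.sublist_append_right l₁ _)
          exact (List.singleton_sublist.2 hr').cons₂ rs |>.cons₂ p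
        have := (det3_neg_iff₁ hprs hrsr).1 (h3' p rs r hsub)
        linarith
    · -- l₁ = l₁' ++ [qs], l₂ = []
      rw [List.concat_eq_append] at h₁
      refine ⟨St t qs p - 1, ?_, by simp⟩
      intro q hq
      rw [h₁] at hq
      rcases List.mem_append.1 hq with hq' | hq'
      · have hqqs : fx t q < fx t qs := by
          rw [h₁] at hpw'
          exact (List.pairwise_append.1 hpw'.1).2.2 q hq' qs (by simp)
        have hqsp : fx t qs < fx t p := hq1 qs (by rw [h₁]; simp)
        have hsub : [q, qs, p].Sublist (l₁ ++ [p]) := by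
          rw [h₁, List.append_assoc]
          exact List.Sublist.append (l₁ := [q]) (r₁ := [qs, p])
            (List.singleton_sublist.2 hq') (List.Sublist.refl _)
        have := (det3_neg_iff₃ hqqs hqsp).1 (h3' q qs p hsub)
        linarith
      · simp at hq'; subst hq'; linarith
    · -- both nonempty
      rw [List.concat_eq_append] at h₁
      have hqsp : fx t qs < fx t p := hq1 qs (by rw [h₁]; simp)
      have hprs : fx t p < fx t rs := hr1 rs (by simp)
      have hsubm : [qs, p, rs].Sublist (l₁ ++ p :: rs :: l₂') := by
        rw [h₁, List.append_assoc]
        refine List.Sublist.trans ?_ (List.sublist_append_right l₁' _)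
        simp only [List.singleton_append]
        exact ((List.nil_sublist l₂').cons₂ rs |>.cons₂ p).cons₂ qs
      have hgap : St t p rs < St t qs p :=
        (det3_neg_iff₂ hqsp hprs).1 (h3' qs p rs hsubm)
      refine ⟨(St t qs p + St t p rs)/2, ?_, ?_⟩
      · intro q hq
        rw [h₁] at hq
        rcases List.mem_append.1 hq with hq' | hq'
        · have hqqs : fx t q < fx t qs := by
            rw [h₁] at hpw'
            exact (List.pairwise_append.1 hpw'.1).2.2 q hq' qs (by simp)
          have hsub : [q, qs, p].Sublist (l₁ ++ p :: rs :: l₂') := by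
            rw [h₁, List.append_assoc]
            refine List.Sublist.append (l₁ := [q]) (r₁ := [qs, p])
              (List.singleton_sublist.2 hq') ?_
            exact ((List.nil_sublist (rs :: l₂')).cons₂ p).cons₂ qs
          have := (det3_neg_iff₃ hqqs hqsp).1 (h3' q qs p hsub)
          linarith
        · simp at hq'; subst hq'; linarith
      · intro r hr
        rcases List.mem_cons.1 hr with rfl | hr'
        · linarith
        · have hrsr : fx t rs < fx t r := (List.pairwise_cons.1 hpw'.2.1.of_cons).1 r hr'
          have hsub : [p, rs, r].Sublist (l₁ ++ p :: rs :: l₂') := by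
            refine List.Sublist.trans ?_ (List.sublist_append_right l₁ _)
            exact (List.singleton_sublist.2 hr').cons₂ rs |>.cons₂ p
          have := (det3_neg_iff₁ hprs hrsr).1 (h3' p rs r hsub)
          linarith
  obtain ⟨m, hm1, hm2⟩ := key
  apply not_mem_hull (isLinearMap_sep' m t)
  intro z hz
  obtain ⟨hzT, hzp⟩ := hz
  have hzl : z ∈ l := by simpa using hzT
  have hzp' : z ≠ p := by simpa using hzp
  rw [hsplit] at hzl
  rcases List.mem_append.1 hzl with hz1 | hz2
  · have h1 := hm1 z hz1
    have h2 := hq1 z hz1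
    rw [St, lt_div_iff₀ (by linarith)] at h1
    simp only [fx] at h1 h2 ⊢
    nlinarith
  · rcases List.mem_cons.1 hz2 with rfl | hz2'
    · exact absurd rfl hzp'
    · have h1 := hm2 z hz2'
      have h2 := hr1 z hz2'
      rw [St, div_lt_iff₀ (by linarith)] at h1
      simp only [fx] at h1 h2 ⊢
      nlinarith

lemma det3_eq_zero_collinear {p q r : ℝ × ℝ} (hpr : p ≠ r) (h : det3 p q r = 0) :
    Collinear ℝ ({p, q, r} : Set (ℝ × ℝ)) := by
  rw [collinear_iff_of_mem (Set.mem_insert p {q, r})]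
  refine ⟨r - p, ?_⟩
  intro x hx
  simp only [Set.mem_insert_iff, Set.mem_singleton_iff] at hx
  have hd : (q.1-p.1)*(r.2-p.2) - (q.2-p.2)*(r.1-p.1) = 0 := h
  rcases hx with rfl | rfl | rfl
  · exact ⟨0, by simp⟩
  · by_cases hc : r.1 = p.1
    · have hr2 : r.2 - p.2 ≠ 0 := by
        intro h2
        apply hpr
        have h22 : r.2 = p.2 := by linarith
        exact (Prod.ext hc h22).symm
      refine ⟨(x.2 - p.2)/(r.2 - p.2), ?_⟩
      have hx1 : x.1 = p.1 := by
        have hz : (x.1-p.1)*(r.2-p.2) = 0 := by rw [hc] at hd; nlinarith [hd]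
        rcases mul_eq_zero.1 hz with h' | h'
        · linarith
        · exact absurd h' hr2
      have c1 : (((x.2 - p.2)/(r.2 - p.2)) • (r - p) +ᵥ p).1 = x.1 := by
        simp [Prod.smul_def, vadd_eq_add, hc, hx1]
      have c2 : (((x.2 - p.2)/(r.2 - p.2)) • (r - p) +ᵥ p).2 = x.2 := by
        simp [Prod.smul_def, vadd_eq_add]
        field_simp
        ring
      exact (Prod.ext c1 c2).symm
    · have hr1 : r.1 - p.1 ≠ 0 := fun h2 => hc (by linarith)
      refine ⟨(x.1 - p.1)/(r.1 - p.1), ?_⟩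
      have c1 : (((x.1 - p.1)/(r.1 - p.1)) • (r - p) +ᵥ p).1 = x.1 := by
        simp [Prod.smul_def, vadd_eq_add]
        field_simp
        ring
      have c2 : (((x.1 - p.1)/(r.1 - p.1)) • (r - p) +ᵥ p).2 = x.2 := by
        simp [Prod.smul_def, vadd_eq_add]
        field_simp
        nlinarith [hd]
      exact (Prod.ext c1 c2).symm
  · exact ⟨1, by simp⟩

lemma affineIndep_det3 {p q r : ℝ × ℝ} (h : AffineIndependent ℝ ![p, q, r]) (hpr : p ≠ r) :
    det3 p q r ≠ 0 := fun h0 =>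
  (affineIndependent_iff_not_collinear_set.1 h) (det3_eq_zero_collinear hpr h0)

theorem erdos_szekeres_binomial_bound (n : ℕ) (S : Finset (ℝ × ℝ))
    (hcard : S.card = Nat.choose (2 * n - 4) (n - 2) + 1)
    (hgen : NoThreeCollinear ↑S) :
    ∃ T : Finset (ℝ × ℝ), T ⊆ S ∧ T.card = n ∧ ConvexIndep ↑T := by
  classical
  rcases Nat.lt_or_ge n 2 with hn | hn
  · interval_cases n
    · refine ⟨∅, by simp, by simp, ?_⟩
      intro p hp
      simp at hp
    · have hpos : 0 < S.card := by rw [hcard]; omega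
      obtain ⟨p, hp⟩ := Finset.card_pos.1 hpos
      refine ⟨{p}, Finset.singleton_subset_iff.2 hp, by simp, ?_⟩
      intro q hq
      have hqp : q = p := by simpa using hq
      subst hqp
      have he : (↑({q} : Finset (ℝ × ℝ)) : Set (ℝ × ℝ)) \ {q} = ∅ := by simp
      rw [he, convexHull_empty]
      exact Set.notMem_empty q
  · set B := ((S ×ˢ S).filter (fun pq : (ℝ × ℝ) × (ℝ × ℝ) => pq.1.2 ≠ pq.2.2)).image
      (fun pq : (ℝ × ℝ) × (ℝ × ℝ) => (pq.2.1 - pq.1.1)/(pq.1.2 - pq.2.2)) with hB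
    obtain ⟨t, ht⟩ := Finset.exists_notMem B
    have hx : ∀ p ∈ S, ∀ q ∈ S, p ≠ q → fx t p ≠ fx t q := by
      intro p hp q hq hne heq
      simp only [fx] at heq
      by_cases h2 : p.2 = q.2
      · refine hne (Prod.ext ?_ h2)
        rw [h2] at heq; linarith
      · apply ht
        rw [hB]
        apply Finset.mem_image.2
        refine ⟨(p, q), Finset.mem_filter.2 ⟨Finset.mem_product.2 ⟨hp, hq⟩, h2⟩, ?_⟩
        show (q.1 - p.1)/(p.2 - q.2) = t
        rw [div_eq_iff (sub_ne_zero.2 h2)]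
        linear_combination -heq
    have hdet : ∀ p ∈ S, ∀ q ∈ S, ∀ r ∈ S, p ≠ q → p ≠ r → q ≠ r → det3 p q r ≠ 0 := by
      intro p hp q hq r hr hpq hpr hqr
      exact affineIndep_det3 (hgen p hp q hq r hr hpq hpr hqr) hpr
    have h24 : 2 * n - 4 = (n-2) + (n-2) := by omega
    rw [h24] at hcard
    have hcard' : Nat.choose ((n-2)+(n-2)) (n-2) + 1 ≤ S.card := le_of_eq hcard.symm
    rcases cupcap t ((n-2)+(n-2)) (n-2) (n-2) rfl S hx hdet hcard'
      with ⟨l, hl, hlen⟩ | ⟨l, hl, hlen⟩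
    · have hlen' : l.length = n := by omega
      have hnd : l.Nodup := by
        have := List.Pairwise.imp
          (fun {a b} (hab : fx t b < fx t a) => (by rintro rfl; exact lt_irrefl _ hab : a ≠ b))
          hl.1
        exact this
      refine ⟨l.toFinset, ?_, ?_, ?_⟩
      · intro x hx'
        exact hl.2.2 x (List.mem_toFinset.1 hx')
      · rw [List.toFinset_card_of_nodup hnd, hlen']
      · have hpw : l.reverse.Pairwise (fun u v => fx t u < fx t v) :=
          List.pairwise_reverse.2 hl.1
        have h3 : ∀ a b c : ℝ × ℝ, [a,b,c].Sublist l.reverse → 0 < det3 a b c := by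
          intro a b c hs
          have h' := hs.reverse
          rw [List.reverse_reverse] at h'
          simp only [List.reverse_cons, List.reverse_nil, List.nil_append,
            List.cons_append] at h'
          exact (hl.2.1 c b a h').2.2
        have hres := cup_convexIndep t hpw h3
        rw [List.toFinset_reverse] at hres
        exact hres
    · have hlen' : l.length = n := by omega
      have hnd : l.Nodup := by
        have := List.Pairwise.imp
          (fun {a b} (hab : fx t a < fx t b) => (by rintro rfl; exact lt_irrefl _ hab : a ≠ b))
          hl.1
        exact this
      refine ⟨l.toFinset, ?_, ?_, ?_⟩
      · intro x hx'
        exact hl.2.2 x (List.mem_toFinset.1 hx')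
      · rw [List.toFinset_card_of_nodup hnd, hlen']
      · exact cap_convexIndep t hl.1 (fun a b c hs => (hl.2.1 a b c hs).2.2)
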